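/- A permutation matrix is join-irreducible in the poset (𝒜_n, ≤) of alternating sign matrices if and only if the corresponding permutation v is bigrassmannian, i.e., there is a unique pair (i, j) such that v⁻¹(i) > v⁻¹(i+1) and v(j) > v(j+1). -/

import Mathlib

/-- An alternating sign matrix: entries in {-1,0,1}, partial row/column sums in {0,1},
full row/column sums equal to 1. -/
def IsASM {n : ℕ} (A : Matrix (Fin n) (Fin n) ℤ) : Prop :=
  (∀ i j, A i j = -1 ∨ A i j = 0 ∨ A i j = 1) ∧
  (∀ i j, (∑ k ∈ Finset.Iic j, A i k) = 0 ∨ (∑ k ∈ Finset.Iic j, A i k) = 1) ∧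
  (∀ i j, (∑ k ∈ Finset.Iic i, A k j) = 0 ∨ (∑ k ∈ Finset.Iic i, A k j) = 1) ∧
  (∀ i, (∑ k, A i k) = 1) ∧
  (∀ j, (∑ k, A k j) = 1)

/-- Corner sum matrix. -/
def cornerSum {n : ℕ} (A : Matrix (Fin n) (Fin n) ℤ) (i j : Fin n) : ℤ :=
  ∑ p ∈ Finset.Iic i, ∑ q ∈ Finset.Iic j, A p q

/-- ASM order: `A ≤ B` iff corner sums of `A` dominate those of `B`. -/
def asmLE {n : ℕ} (A B : Matrix (Fin n) (Fin n) ℤ) : Prop :=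
  ∀ i j, cornerSum B i j ≤ cornerSum A i j

def asmLT {n : ℕ} (A B : Matrix (Fin n) (Fin n) ℤ) : Prop :=
  asmLE A B ∧ ¬ asmLE B A

/-- `B` covers `A` in the poset of ASMs of size `n`. -/
def asmCovers {n : ℕ} (A B : Matrix (Fin n) (Fin n) ℤ) : Prop :=
  asmLT A B ∧ ∀ C : Matrix (Fin n) (Fin n) ℤ, IsASM C → asmLT A C → ¬ asmLT C B

/-- `A` is join-irreducible: it covers exactly one element of the ASM poset. -/
def JoinIrred {n : ℕ} (A : Matrix (Fin n) (Fin n) ℤ) : Prop :=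
  IsASM A ∧ ∃! C : Matrix (Fin n) (Fin n) ℤ, IsASM C ∧ asmCovers C A

/-- `β B` = number of join-irreducible ASMs weakly below `B`. -/
noncomputable def asmBeta {n : ℕ} (B : Matrix (Fin n) (Fin n) ℤ) : ℕ :=
  Set.ncard {A : Matrix (Fin n) (Fin n) ℤ | JoinIrred A ∧ asmLE A B}

/-- Permutation matrix of `v`. -/
def permMatrix {n : ℕ} (v : Equiv.Perm (Fin n)) : Matrix (Fin n) (Fin n) ℤ :=
  fun i j => if j = v i then 1 else 0

open Finset

namespace ASMAux

variable {n : ℕ}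

/-- Row partial sum with ℕ cutoff. -/
def rwp (A : Matrix (Fin n) (Fin n) ℤ) (i : Fin n) (j : ℕ) : ℤ :=
  ∑ q ∈ univ.filter (fun q : Fin n => (q : ℕ) < j), A i q

/-- Column partial sum with ℕ cutoff. -/
def cwp (A : Matrix (Fin n) (Fin n) ℤ) (j : Fin n) (i : ℕ) : ℤ :=
  ∑ p ∈ univ.filter (fun p : Fin n => (p : ℕ) < i), A p j

/-- Corner sums with ℕ cutoffs. -/
def rp (A : Matrix (Fin n) (Fin n) ℤ) (P Q : ℕ) : ℤ :=
  ∑ p ∈ univ.filter (fun p : Fin n => (p : ℕ) < P), rwp A p Q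

lemma sum_filter_lt_succ (f : Fin n → ℤ) (j : ℕ) :
    ∑ q ∈ univ.filter (fun q : Fin n => (q:ℕ) < j+1), f q
      = (∑ q ∈ univ.filter (fun q : Fin n => (q:ℕ) < j), f q)
        + (if h : j < n then f ⟨j, h⟩ else 0) := by
  classical
  have hsplit : (univ.filter (fun q : Fin n => (q:ℕ) < j+1))
      = (univ.filter (fun q : Fin n => (q:ℕ) < j)) ∪ (univ.filter (fun q : Fin n => (q:ℕ) = j)) := by
    ext q; simp; omega
  have hdisj : Disjoint (univ.filter (fun q : Fin n => (q:ℕ) < j))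
      (univ.filter (fun q : Fin n => (q:ℕ) = j)) := by
    simp only [Finset.disjoint_left, mem_filter, mem_univ, true_and]
    intro a h1 h2; omega
  rw [hsplit, Finset.sum_union hdisj]
  congr 1
  by_cases h : j < n
  · rw [dif_pos h]
    have : univ.filter (fun q : Fin n => (q:ℕ) = j) = {⟨j,h⟩} := by
      ext q; simp [Fin.ext_iff]
    simp [this]
  · rw [dif_neg h]
    have : univ.filter (fun q : Fin n => (q:ℕ) = j) = (∅ : Finset (Fin n)) := by
      ext q; simp; intro hq; omega
    simp [this]

lemma sum_filter_lt_of_ge (f : Fin n → ℤ) {j : ℕ} (h : n ≤ j) :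
    ∑ q ∈ univ.filter (fun q : Fin n => (q:ℕ) < j), f q = ∑ q, f q := by
  congr 1
  ext q; simp; exact lt_of_lt_of_le q.isLt h

lemma sum_ind {t : ℕ} (ht : t < n) (Q : ℕ) :
    (∑ q ∈ univ.filter (fun q : Fin n => (q:ℕ) < Q), if (q:ℕ) = t then (1:ℤ) else 0)
      = if t < Q then 1 else 0 := by
  classical
  have : ∀ q : Fin n, ((q:ℕ) = t) = (q = ⟨t, ht⟩) := by
    intro q; simp [Fin.ext_iff]
  simp only [this]
  rw [Finset.sum_ite_eq' (univ.filter (fun q : Fin n => (q:ℕ) < Q)) (⟨t,ht⟩ : Fin n) (fun _ => (1:ℤ))]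
  simp

lemma sum_ind2 (c : Prop) [Decidable c] {t : ℕ} (ht : t < n) (Q : ℕ) :
    (∑ q ∈ univ.filter (fun q : Fin n => (q:ℕ) < Q), if c ∧ (q:ℕ) = t then (1:ℤ) else 0)
      = if c ∧ t < Q then 1 else 0 := by
  by_cases hc : c <;> simp [hc, sum_ind ht Q]

lemma sum_ind2' (c : Prop) [Decidable c] {t : ℕ} (ht : t < n) (Q : ℕ) :
    (∑ q ∈ univ.filter (fun q : Fin n => (q:ℕ) < Q), if (q:ℕ) = t ∧ c then (1:ℤ) else 0)
      = if t < Q ∧ c then 1 else 0 := by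
  by_cases hc : c <;> simp [hc, sum_ind ht Q]

lemma rwp_zero (A : Matrix (Fin n) (Fin n) ℤ) (i : Fin n) : rwp A i 0 = 0 := by
  unfold rwp; convert Finset.sum_empty; ext q; simp

lemma rwp_succ (A : Matrix (Fin n) (Fin n) ℤ) (i : Fin n) (j : ℕ) :
    rwp A i (j+1) = rwp A i j + (if h : j < n then A i ⟨j, h⟩ else 0) := by
  unfold rwp; exact sum_filter_lt_succ _ _

lemma rwp_of_ge (A : Matrix (Fin n) (Fin n) ℤ) (i : Fin n) {j : ℕ} (h : n ≤ j) :
    rwp A i j = ∑ q, A i q := sum_filter_lt_of_ge _ h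

lemma cwp_zero (A : Matrix (Fin n) (Fin n) ℤ) (j : Fin n) : cwp A j 0 = 0 := by
  unfold cwp; convert Finset.sum_empty; ext q; simp

lemma cwp_succ (A : Matrix (Fin n) (Fin n) ℤ) (j : Fin n) (i : ℕ) :
    cwp A j (i+1) = cwp A j i + (if h : i < n then A ⟨i, h⟩ j else 0) := by
  unfold cwp; exact sum_filter_lt_succ _ _

lemma cwp_of_ge (A : Matrix (Fin n) (Fin n) ℤ) (j : Fin n) {i : ℕ} (h : n ≤ i) :
    cwp A j i = ∑ p, A p j := sum_filter_lt_of_ge _ h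

lemma rp_zero (A : Matrix (Fin n) (Fin n) ℤ) (Q : ℕ) : rp A 0 Q = 0 := by
  unfold rp; convert Finset.sum_empty; ext q; simp

lemma rp_succ (A : Matrix (Fin n) (Fin n) ℤ) (P Q : ℕ) :
    rp A (P+1) Q = rp A P Q + (if h : P < n then rwp A ⟨P, h⟩ Q else 0) := by
  unfold rp; exact sum_filter_lt_succ _ _

lemma rp_comm (A : Matrix (Fin n) (Fin n) ℤ) (P Q : ℕ) :
    rp A P Q = ∑ q ∈ univ.filter (fun q : Fin n => (q:ℕ) < Q), cwp A q P := by
  unfold rp rwp cwp; exact Finset.sum_comm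

lemma rp_col_zero (A : Matrix (Fin n) (Fin n) ℤ) (P : ℕ) : rp A P 0 = 0 := by
  rw [rp_comm]; convert Finset.sum_empty; ext q; simp

lemma rp_col_succ (A : Matrix (Fin n) (Fin n) ℤ) (P Q : ℕ) :
    rp A P (Q+1) = rp A P Q + (if h : Q < n then cwp A ⟨Q, h⟩ P else 0) := by
  rw [rp_comm, rp_comm]; exact sum_filter_lt_succ _ _

end ASMAux

section Chunk2
open Finset
namespace ASMAux
variable {n : ℕ}

lemma Iic_eq_filter (j : Fin n) :
    Finset.Iic j = univ.filter (fun q : Fin n => (q:ℕ) < (j:ℕ)+1) := by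
  ext q
  simp only [Finset.mem_Iic, mem_filter, mem_univ, true_and, Fin.le_def, Nat.lt_succ_iff]

lemma Iic_sum_row (A : Matrix (Fin n) (Fin n) ℤ) (i : Fin n) (j : Fin n) :
    (∑ k ∈ Finset.Iic j, A i k) = rwp A i ((j:ℕ)+1) := by
  rw [Iic_eq_filter]; rfl

lemma Iic_sum_col (A : Matrix (Fin n) (Fin n) ℤ) (i : Fin n) (j : Fin n) :
    (∑ k ∈ Finset.Iic i, A k j) = cwp A j ((i:ℕ)+1) := by
  rw [Iic_eq_filter]; rfl

variable {A : Matrix (Fin n) (Fin n) ℤ}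

lemma rwp01 (hA : IsASM A) (i : Fin n) (j : ℕ) : rwp A i j = 0 ∨ rwp A i j = 1 := by
  match j with
  | 0 => left; exact rwp_zero A i
  | (j+1) =>
    by_cases h : j < n
    · have := hA.2.1 i ⟨j, h⟩
      rwa [Iic_sum_row] at this
    · right
      rw [rwp_of_ge A i (by omega)]
      exact hA.2.2.2.1 i

lemma rwp_top (hA : IsASM A) (i : Fin n) {j : ℕ} (h : n ≤ j) : rwp A i j = 1 := by
  rw [rwp_of_ge A i h]; exact hA.2.2.2.1 i

lemma cwp01 (hA : IsASM A) (j : Fin n) (i : ℕ) : cwp A j i = 0 ∨ cwp A j i = 1 := by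
  match i with
  | 0 => left; exact cwp_zero A j
  | (i+1) =>
    by_cases h : i < n
    · have := hA.2.2.1 ⟨i, h⟩ j
      rwa [Iic_sum_col] at this
    · right
      rw [cwp_of_ge A j (by omega)]
      exact hA.2.2.2.2 j

lemma cwp_top (hA : IsASM A) (j : Fin n) {i : ℕ} (h : n ≤ i) : cwp A j i = 1 := by
  rw [cwp_of_ge A j h]; exact hA.2.2.2.2 j

lemma rp_top_row (hA : IsASM A) {P : ℕ} (hP : n ≤ P) : ∀ {Q : ℕ}, Q ≤ n → rp A P Q = Q := by
  intro Q
  induction Q with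
  | zero => intro _; simp [rp_col_zero]
  | succ Q ih =>
    intro hQ
    have hQn : Q < n := by omega
    rw [rp_col_succ, ih (by omega), dif_pos hQn, cwp_top hA _ hP]
    push_cast; ring

lemma rp_top_col (hA : IsASM A) {Q : ℕ} (hQ : n ≤ Q) : ∀ {P : ℕ}, P ≤ n → rp A P Q = P := by
  intro P
  induction P with
  | zero => intro _; simp [rp_zero]
  | succ P ih =>
    intro hP
    have hPn : P < n := by omega
    rw [rp_succ, ih (by omega), dif_pos hPn, rwp_top hA _ hQ]
    push_cast; ring

lemma corner_eq_rp (A : Matrix (Fin n) (Fin n) ℤ) (a b : Fin n) :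
    cornerSum A a b = rp A ((a:ℕ)+1) ((b:ℕ)+1) := by
  unfold cornerSum rp
  rw [Iic_eq_filter]
  exact Finset.sum_congr rfl (fun p _ => Iic_sum_row A p b)

lemma entry_eq_rp (A : Matrix (Fin n) (Fin n) ℤ) (p q : Fin n) :
    A p q = rp A ((p:ℕ)+1) ((q:ℕ)+1) - rp A (p:ℕ) ((q:ℕ)+1)
      - rp A ((p:ℕ)+1) (q:ℕ) + rp A (p:ℕ) (q:ℕ) := by
  have h1 := rp_succ A (p:ℕ) ((q:ℕ)+1)
  have h2 := rp_succ A (p:ℕ) (q:ℕ)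
  rw [dif_pos p.isLt] at h1 h2
  have h3 := rwp_succ A ⟨(p:ℕ), p.isLt⟩ (q:ℕ)
  rw [dif_pos q.isLt] at h3
  simp only [Fin.eta] at h1 h2 h3
  rw [h1, h2, h3]; ring

lemma rp_eq_of_corner {A B : Matrix (Fin n) (Fin n) ℤ}
    (h : ∀ a b, cornerSum A a b = cornerSum B a b) :
    ∀ P Q, P ≤ n → Q ≤ n → rp A P Q = rp B P Q := by
  intro P Q hP hQ
  match P, Q with
  | 0, Q => rw [rp_zero, rp_zero]
  | (P+1), 0 => rw [rp_col_zero, rp_col_zero]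
  | (P+1), (Q+1) =>
    have hPn : P < n := by omega
    have hQn : Q < n := by omega
    have := h ⟨P, hPn⟩ ⟨Q, hQn⟩
    rwa [corner_eq_rp, corner_eq_rp] at this

lemma corner_inj {A B : Matrix (Fin n) (Fin n) ℤ}
    (h : ∀ a b, cornerSum A a b = cornerSum B a b) : A = B := by
  funext p q
  have e1 := entry_eq_rp A p q
  have e2 := entry_eq_rp B p q
  rw [e1, e2,
    rp_eq_of_corner h ((p:ℕ)+1) ((q:ℕ)+1) p.isLt q.isLt,
    rp_eq_of_corner h (p:ℕ) ((q:ℕ)+1) (le_of_lt p.isLt) q.isLt,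
    rp_eq_of_corner h ((p:ℕ)+1) (q:ℕ) p.isLt (le_of_lt q.isLt),
    rp_eq_of_corner h (p:ℕ) (q:ℕ) (le_of_lt p.isLt) (le_of_lt q.isLt)]

end ASMAux
end Chunk2
section Chunk3
open Finset
namespace ASMAux
variable {n : ℕ}

lemma perm_rwp (v : Equiv.Perm (Fin n)) (i : Fin n) (Q : ℕ) :
    rwp (permMatrix v) i Q = if (v i : ℕ) < Q then 1 else 0 := by
  unfold rwp permMatrix
  rw [Finset.sum_ite_eq' (univ.filter (fun q : Fin n => (q:ℕ) < Q)) (v i) (fun _ => (1:ℤ))]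
  simp

lemma perm_entry_symm (v : Equiv.Perm (Fin n)) (p q : Fin n) :
    permMatrix v p q = if p = v.symm q then 1 else 0 := by
  unfold permMatrix
  by_cases h : q = v p
  · rw [if_pos h, if_pos (by rw [h]; simp)]
  · rw [if_neg h, if_neg (by intro hp; apply h; rw [hp]; simp)]

lemma perm_cwp (v : Equiv.Perm (Fin n)) (j : Fin n) (P : ℕ) :
    cwp (permMatrix v) j P = if (v.symm j : ℕ) < P then 1 else 0 := by
  unfold cwp
  simp only [perm_entry_symm v _ j]
  rw [Finset.sum_ite_eq' (univ.filter (fun p : Fin n => (p:ℕ) < P)) (v.symm j) (fun _ => (1:ℤ))]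
  simp

lemma perm_isASM (v : Equiv.Perm (Fin n)) : IsASM (permMatrix v) := by
  refine ⟨?_, ?_, ?_, ?_, ?_⟩
  · intro i j; unfold permMatrix; split <;> simp
  · intro i j
    rw [Iic_sum_row, perm_rwp]
    split <;> simp
  · intro i j
    rw [Iic_sum_col, perm_cwp]
    split <;> simp
  · intro i
    have := rwp_of_ge (permMatrix v) i (le_refl n)
    rw [perm_rwp] at this
    rw [← this, if_pos (v i).isLt]
  · intro j
    have := cwp_of_ge (permMatrix v) j (le_refl n)
    rw [perm_cwp] at this
    rw [← this, if_pos (v.symm j).isLt]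

/-- Descent of a permutation at position i. -/
def Desc (w : Equiv.Perm (Fin n)) (i : Fin n) : Prop :=
  ∃ h : (i:ℕ)+1 < n, (w ⟨(i:ℕ)+1, h⟩ : ℕ) < w i

/-- Addable cell for the permutation matrix of v. -/
def Addable (v : Equiv.Perm (Fin n)) (i j : Fin n) : Prop :=
  ∃ (hi : (i:ℕ)+1 < n) (hj : (j:ℕ)+1 < n),
    (v ⟨(i:ℕ)+1, hi⟩ : ℕ) ≤ j ∧ (j:ℕ) < v i ∧
    (v.symm ⟨(j:ℕ)+1, hj⟩ : ℕ) ≤ i ∧ (i:ℕ) < v.symm j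

lemma addable_symm {v : Equiv.Perm (Fin n)} {i j : Fin n} (h : Addable v i j) :
    Addable v.symm j i := by
  obtain ⟨hi, hj, h1, h2, h3, h4⟩ := h
  exact ⟨hj, hi, h3, h4, by simpa using h1, by simpa using h2⟩

lemma addable_desc {v : Equiv.Perm (Fin n)} {i j : Fin n} (h : Addable v i j) :
    Desc v i ∧ Desc v.symm j := by
  obtain ⟨hi, hj, h1, h2, h3, h4⟩ := h
  exact ⟨⟨hi, by omega⟩, ⟨hj, by omega⟩⟩

lemma desc_addable {v : Equiv.Perm (Fin n)} {i : Fin n} (h : Desc v i) :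
    ∃ j : Fin n, Addable v i j := by
  obtain ⟨hi, hd⟩ := h
  -- slide right from j = v ⟨i+1⟩
  suffices H : ∀ k (j : ℕ) (hj : j < n), (v ⟨(i:ℕ)+1, hi⟩ : ℕ) ≤ j → j < v i →
      (i:ℕ) < v.symm ⟨j, hj⟩ → (v i : ℕ) - j ≤ k → ∃ jf : Fin n, Addable v i jf by
    refine H (v i : ℕ) (v ⟨(i:ℕ)+1, hi⟩ : ℕ) (v _).isLt (le_refl _) hd ?_ (by omega)
    · have : (⟨((v ⟨(i:ℕ)+1, hi⟩ : Fin n) : ℕ), (v _).isLt⟩ : Fin n) = v ⟨(i:ℕ)+1, hi⟩ := by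
        apply Fin.ext; rfl
      rw [this, Equiv.symm_apply_apply]
      simp
  intro k
  induction k with
  | zero => intro j hj h1 h2 h3 hk; omega
  | succ k ih =>
    intro j hj h1 h2 h3 hk
    have hj1 : j + 1 < n := by have := (v i).isLt; omega
    by_cases hc : (v.symm ⟨j+1, hj1⟩ : ℕ) ≤ i
    · exact ⟨⟨j, hj⟩, hi, hj1, h1, h2, hc, h3⟩
    · push_neg at hc
      have h2' : j + 1 < (v i : ℕ) := by
        rcases Nat.lt_or_ge (j+1) (v i : ℕ) with h | h
        · exact h
        · exfalso
          have : (⟨j+1, hj1⟩ : Fin n) = v i := by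
            apply Fin.ext; simp only [Fin.val_mk]; omega
          rw [this, Equiv.symm_apply_apply] at hc; omega
      exact ih (j+1) hj1 (by omega) h2' hc (by omega)

end ASMAux
end Chunk3
section Chunk4
open Finset
namespace ASMAux
variable {n : ℕ}

/-- The ASM obtained from a permutation matrix by "adding 1" to the corner sum at (i,j). -/
def bump (v : Equiv.Perm (Fin n)) (i j : Fin n) : Matrix (Fin n) (Fin n) ℤ :=
  fun p q => permMatrix v p q
    + (if (p:ℕ) = (i:ℕ) ∧ (q:ℕ) = (j:ℕ) then 1 else 0)
    - (if (p:ℕ) = (i:ℕ) ∧ (q:ℕ) = (j:ℕ)+1 then 1 else 0)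
    - (if (p:ℕ) = (i:ℕ)+1 ∧ (q:ℕ) = (j:ℕ) then 1 else 0)
    + (if (p:ℕ) = (i:ℕ)+1 ∧ (q:ℕ) = (j:ℕ)+1 then 1 else 0)

lemma rwp_bump (v : Equiv.Perm (Fin n)) (i j : Fin n) (hj : (j:ℕ)+1 < n)
    (p : Fin n) (Q : ℕ) :
    rwp (bump v i j) p Q = (if (v p : ℕ) < Q then 1 else 0)
      + (if (p:ℕ) = (i:ℕ) ∧ Q = (j:ℕ)+1 then 1 else 0)
      - (if (p:ℕ) = (i:ℕ)+1 ∧ Q = (j:ℕ)+1 then 1 else 0) := by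
  unfold rwp bump
  rw [show ∀ (f g h k l : Fin n → ℤ),
    (∑ q ∈ univ.filter (fun q : Fin n => (q:ℕ) < Q), (f q + g q - h q - k q + l q))
      = (∑ q ∈ univ.filter (fun q : Fin n => (q:ℕ) < Q), f q)
      + (∑ q ∈ univ.filter (fun q : Fin n => (q:ℕ) < Q), g q)
      - (∑ q ∈ univ.filter (fun q : Fin n => (q:ℕ) < Q), h q)
      - (∑ q ∈ univ.filter (fun q : Fin n => (q:ℕ) < Q), k q)
      + (∑ q ∈ univ.filter (fun q : Fin n => (q:ℕ) < Q), l q) from by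
      intro f g h k l
      rw [Finset.sum_add_distrib, Finset.sum_sub_distrib, Finset.sum_sub_distrib,
        Finset.sum_add_distrib]]
  have e1 : rwp (permMatrix v) p Q = if (v p : ℕ) < Q then 1 else 0 := perm_rwp v p Q
  unfold rwp at e1
  rw [e1,
    sum_ind2 ((p:ℕ) = (i:ℕ)) j.isLt Q,
    sum_ind2 ((p:ℕ) = (i:ℕ)) hj Q,
    sum_ind2 ((p:ℕ) = (i:ℕ)+1) j.isLt Q,
    sum_ind2 ((p:ℕ) = (i:ℕ)+1) hj Q]
  have hii : ¬ ((p:ℕ) = (i:ℕ) ∧ (p:ℕ) = (i:ℕ)+1) := by omega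
  split_ifs <;> omega

lemma cwp_bump (v : Equiv.Perm (Fin n)) (i j : Fin n) (hi : (i:ℕ)+1 < n)
    (q : Fin n) (P : ℕ) :
    cwp (bump v i j) q P = (if (v.symm q : ℕ) < P then 1 else 0)
      + (if (q:ℕ) = (j:ℕ) ∧ P = (i:ℕ)+1 then 1 else 0)
      - (if (q:ℕ) = (j:ℕ)+1 ∧ P = (i:ℕ)+1 then 1 else 0) := by
  unfold cwp bump
  rw [show ∀ (f g h k l : Fin n → ℤ),
    (∑ x ∈ univ.filter (fun x : Fin n => (x:ℕ) < P), (f x + g x - h x - k x + l x))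
      = (∑ x ∈ univ.filter (fun x : Fin n => (x:ℕ) < P), f x)
      + (∑ x ∈ univ.filter (fun x : Fin n => (x:ℕ) < P), g x)
      - (∑ x ∈ univ.filter (fun x : Fin n => (x:ℕ) < P), h x)
      - (∑ x ∈ univ.filter (fun x : Fin n => (x:ℕ) < P), k x)
      + (∑ x ∈ univ.filter (fun x : Fin n => (x:ℕ) < P), l x) from by
      intro f g h k l
      rw [Finset.sum_add_distrib, Finset.sum_sub_distrib, Finset.sum_sub_distrib,
        Finset.sum_add_distrib]]
  have e1 : cwp (permMatrix v) q P = if (v.symm q : ℕ) < P then 1 else 0 := perm_cwp v q P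
  unfold cwp at e1
  rw [e1,
    sum_ind2' ((q:ℕ) = (j:ℕ)) i.isLt P,
    sum_ind2' ((q:ℕ) = (j:ℕ)+1) i.isLt P,
    sum_ind2' ((q:ℕ) = (j:ℕ)) hi P,
    sum_ind2' ((q:ℕ) = (j:ℕ)+1) hi P]
  split_ifs <;> omega

lemma rp_bump (v : Equiv.Perm (Fin n)) (i j : Fin n) (hi : (i:ℕ)+1 < n) (hj : (j:ℕ)+1 < n)
    (P Q : ℕ) :
    rp (bump v i j) P Q = rp (permMatrix v) P Q
      + (if P = (i:ℕ)+1 ∧ Q = (j:ℕ)+1 then 1 else 0) := by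
  rw [rp_comm, rp_comm]
  rw [show (∑ q ∈ univ.filter (fun q : Fin n => (q:ℕ) < Q), cwp (bump v i j) q P)
      = ∑ q ∈ univ.filter (fun q : Fin n => (q:ℕ) < Q),
        (cwp (permMatrix v) q P
          + (if (q:ℕ) = (j:ℕ) ∧ P = (i:ℕ)+1 then 1 else 0)
          - (if (q:ℕ) = (j:ℕ)+1 ∧ P = (i:ℕ)+1 then 1 else 0)) from by
    apply Finset.sum_congr rfl; intro q _
    rw [cwp_bump v i j hi q P, perm_cwp]]
  rw [show ∀ (f g h : Fin n → ℤ),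
    (∑ q ∈ univ.filter (fun q : Fin n => (q:ℕ) < Q), (f q + g q - h q))
      = (∑ q ∈ univ.filter (fun q : Fin n => (q:ℕ) < Q), f q)
      + (∑ q ∈ univ.filter (fun q : Fin n => (q:ℕ) < Q), g q)
      - (∑ q ∈ univ.filter (fun q : Fin n => (q:ℕ) < Q), h q) from by
      intro f g h
      rw [Finset.sum_sub_distrib, Finset.sum_add_distrib]]
  rw [sum_ind2' (P = (i:ℕ)+1) j.isLt Q,
    sum_ind2' (P = (i:ℕ)+1) hj Q]
  split_ifs <;> omega

end ASMAux
end Chunk4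
section Chunk5
open Finset
namespace ASMAux
variable {n : ℕ}

lemma bump_isASM {v : Equiv.Perm (Fin n)} {i j : Fin n} (h : Addable v i j) :
    IsASM (bump v i j) := by
  obtain ⟨hi, hj, h1, h2, h3, h4⟩ := h
  have hkey1 : ∀ p q : Fin n, (p:ℕ) = (i:ℕ) → q = v p → (j:ℕ) < (q:ℕ) := by
    intro p q hp hq
    have : p = i := Fin.ext hp
    subst this; rw [hq]; exact h2
  have hkey2 : ∀ p q : Fin n, (p:ℕ) = (i:ℕ)+1 → q = v p → (q:ℕ) ≤ (j:ℕ) := by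
    intro p q hp hq
    have : p = (⟨(i:ℕ)+1, hi⟩ : Fin n) := Fin.ext hp
    subst this; rw [hq]; exact h1
  refine ⟨?_, ?_, ?_, ?_, ?_⟩
  · -- entries
    intro p q
    unfold bump permMatrix
    by_cases e1 : q = v p
    · have hne1 : ¬ ((p:ℕ) = (i:ℕ) ∧ (q:ℕ) = (j:ℕ)) := by
        rintro ⟨a, b⟩; have := hkey1 p q a e1; omega
      have hne2 : ¬ ((p:ℕ) = (i:ℕ)+1 ∧ (q:ℕ) = (j:ℕ)+1) := by
        rintro ⟨a, b⟩; have := hkey2 p q a e1; omega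
      rw [if_pos e1, if_neg hne1, if_neg hne2]
      split_ifs <;> omega
    · rw [if_neg e1]
      split_ifs <;> omega
  · -- row partial sums
    intro p jj
    rw [Iic_sum_row, rwp_bump v i j hj]
    by_cases hp : (p:ℕ) = (i:ℕ)
    · have : p = i := Fin.ext hp
      subst this
      have hne : ¬ ((p:ℕ) = (p:ℕ)+1) := by omega
      split_ifs <;> omega
    · by_cases hp2 : (p:ℕ) = (i:ℕ)+1
      · have : p = (⟨(i:ℕ)+1, hi⟩ : Fin n) := Fin.ext hp2
        subst this
        split_ifs <;> omega
      · split_ifs <;> omega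
  · -- column partial sums
    intro ii q
    rw [Iic_sum_col, cwp_bump v i j hi]
    by_cases hq : (q:ℕ) = (j:ℕ)
    · have : q = j := Fin.ext hq
      subst this
      split_ifs <;> omega
    · by_cases hq2 : (q:ℕ) = (j:ℕ)+1
      · have : q = (⟨(j:ℕ)+1, hj⟩ : Fin n) := Fin.ext hq2
        subst this
        split_ifs <;> omega
      · split_ifs <;> omega
  · -- full row sums
    intro p
    have := rwp_of_ge (bump v i j) p (le_refl n)
    rw [rwp_bump v i j hj] at this
    rw [← this]
    have hvp : ((v p : ℕ) < n) := (v p).isLt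
    split_ifs <;> omega
  · -- full column sums
    intro q
    have := cwp_of_ge (bump v i j) q (le_refl n)
    rw [cwp_bump v i j hi] at this
    rw [← this]
    have hvq : ((v.symm q : ℕ) < n) := (v.symm q).isLt
    split_ifs <;> omega

lemma bump_corner {v : Equiv.Perm (Fin n)} {i j : Fin n} (hi : (i:ℕ)+1 < n) (hj : (j:ℕ)+1 < n)
    (a b : Fin n) :
    cornerSum (bump v i j) a b
      = cornerSum (permMatrix v) a b + (if a = i ∧ b = j then 1 else 0) := by
  rw [corner_eq_rp, corner_eq_rp, rp_bump v i j hi hj]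
  congr 1
  have : ((a:ℕ)+1 = (i:ℕ)+1 ∧ (b:ℕ)+1 = (j:ℕ)+1) ↔ (a = i ∧ b = j) := by
    rw [Fin.ext_iff, Fin.ext_iff]; omega
  simp only [this]

end ASMAux
end Chunk5
section Chunk6
open Finset
namespace ASMAux
variable {n : ℕ}

lemma bump_covers {v : Equiv.Perm (Fin n)} {i j : Fin n} (h : Addable v i j) :
    asmLT (bump v i j) (permMatrix v) ∧
    ∀ D : Matrix (Fin n) (Fin n) ℤ, IsASM D →
      asmLT (bump v i j) D → ¬ asmLT D (permMatrix v) := by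
  obtain ⟨hi, hj, _, _, _, _⟩ := h
  have hb := fun a b => bump_corner (v := v) hi hj a b
  constructor
  · constructor
    · intro a b; rw [hb a b]; split_ifs <;> omega
    · intro hle
      have := hle i j
      rw [hb i j, if_pos ⟨rfl, rfl⟩] at this
      omega
  · intro D _ hCD hDA
    have h1 : ∀ a b, cornerSum (permMatrix v) a b ≤ cornerSum D a b := hDA.1
    have h2 : ∀ a b, cornerSum D a b ≤ cornerSum (bump v i j) a b := hCD.1
    by_cases hc : cornerSum D i j = cornerSum (permMatrix v) i j
    · have : D = permMatrix v := by
        apply corner_inj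
        intro a b
        have ha := h1 a b; have hb2 := h2 a b
        rw [hb a b] at hb2
        by_cases hab : a = i ∧ b = j
        · obtain ⟨rfl, rfl⟩ := hab; omega
        · rw [if_neg hab] at hb2; omega
      rw [this] at hDA
      exact hDA.2 (fun a b => le_refl _)
    · have : D = bump v i j := by
        apply corner_inj
        intro a b
        have ha := h1 a b; have hb2 := h2 a b
        rw [hb a b] at hb2 ⊢
        by_cases hab : a = i ∧ b = j
        · obtain ⟨rfl, rfl⟩ := hab
          rw [if_pos ⟨rfl, rfl⟩]
          rw [if_pos ⟨rfl, rfl⟩] at hb2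
          omega
        · rw [if_neg hab] at hb2 ⊢; omega
      rw [this] at hCD
      exact hCD.2 (fun a b => le_refl _)

lemma bump_asmCovers {v : Equiv.Perm (Fin n)} {i j : Fin n} (h : Addable v i j) :
    asmCovers (bump v i j) (permMatrix v) := bump_covers h

end ASMAux
end Chunk6
section Chunk7
open Finset
namespace ASMAux
variable {n : ℕ}

/-- Difference of corner sums between C and the permutation matrix. -/
def dd (v : Equiv.Perm (Fin n)) (C : Matrix (Fin n) (Fin n) ℤ) (P Q : ℕ) : ℤ :=
  rp C P Q - rp (permMatrix v) P Q

variable {v : Equiv.Perm (Fin n)} {C : Matrix (Fin n) (Fin n) ℤ} {m : ℤ}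

lemma dd_cell (hC : IsASM C) (hm : 1 ≤ m) {P Q : ℕ} (hP : P ≤ n) (hQ : Q ≤ n)
    (h : dd v C P Q = m) : 1 ≤ P ∧ P < n ∧ 1 ≤ Q ∧ Q < n := by
  have hA := perm_isASM v
  refine ⟨?_, ?_, ?_, ?_⟩
  · by_contra hc
    have hP0 : P = 0 := by omega
    subst hP0
    rw [dd, rp_zero, rp_zero] at h; omega
  · by_contra hc
    have hPn : P = n := by omega
    rw [hPn] at h
    rw [dd, rp_top_row hC (le_refl n) hQ, rp_top_row hA (le_refl n) hQ] at h; omega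
  · by_contra hc
    have hQ0 : Q = 0 := by omega
    subst hQ0
    rw [dd, rp_col_zero, rp_col_zero] at h; omega
  · by_contra hc
    have hQn : Q = n := by omega
    rw [hQn] at h
    rw [dd, rp_top_col hC (le_refl n) hP, rp_top_col hA (le_refl n) hP] at h; omega

lemma dd_step_row (hC : IsASM C) {P : ℕ} (hP : P < n) (Q : ℕ) :
    ∃ s : ℤ, (s = 0 ∨ s = 1) ∧
      dd v C (P+1) Q = dd v C P Q + s - (if (v ⟨P, hP⟩ : ℕ) < Q then 1 else 0) := by
  refine ⟨rwp C ⟨P, hP⟩ Q, rwp01 hC _ _, ?_⟩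
  unfold dd
  rw [rp_succ C P Q, rp_succ (permMatrix v) P Q, dif_pos hP, dif_pos hP, perm_rwp]
  ring

lemma dd_step_col (hC : IsASM C) (P : ℕ) {Q : ℕ} (hQ : Q < n) :
    ∃ s : ℤ, (s = 0 ∨ s = 1) ∧
      dd v C P (Q+1) = dd v C P Q + s - (if (v.symm ⟨Q, hQ⟩ : ℕ) < P then 1 else 0) := by
  refine ⟨cwp C ⟨Q, hQ⟩ P, cwp01 hC _ _, ?_⟩
  unfold dd
  rw [rp_col_succ C P Q, rp_col_succ (permMatrix v) P Q, dif_pos hQ, dif_pos hQ, perm_cwp]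
  ring

lemma slide_up (hC : IsASM C) (hm : 1 ≤ m)
    (hmax : ∀ P Q, P ≤ n → Q ≤ n → dd v C P Q ≤ m) (Q : ℕ) (hQ : Q ≤ n) :
    ∀ P, P < n → dd v C (P+1) Q = m →
      ∃ P', ∃ h : P' < n, dd v C (P'+1) Q = m ∧ Q ≤ (v ⟨P', h⟩ : ℕ) := by
  intro P
  induction P using Nat.strong_induction_on with
  | _ P ih =>
    intro hPn hd
    by_cases hb : Q ≤ (v ⟨P, hPn⟩ : ℕ)
    · exact ⟨P, hPn, hd, hb⟩
    · push_neg at hb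
      obtain ⟨s, hs, he⟩ := dd_step_row hC hPn Q
      rw [if_pos hb] at he
      have hdP : dd v C P Q = m := by
        have := hmax P Q (by omega) hQ
        omega
      have hP0 : 1 ≤ P := (dd_cell hC hm (by omega) hQ hdP).1
      obtain ⟨P₂, rfl⟩ : ∃ P₂, P = P₂ + 1 := ⟨P-1, by omega⟩
      exact ih P₂ (by omega) (by omega) hdP

lemma slide_down (hC : IsASM C) (hm : 1 ≤ m)
    (hmax : ∀ P Q, P ≤ n → Q ≤ n → dd v C P Q ≤ m) (Q : ℕ) (hQ : Q ≤ n) :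
    ∀ k P, n - P ≤ k → ∀ hPn : P < n, dd v C (P+1) Q = m → Q ≤ (v ⟨P, hPn⟩ : ℕ) →
      ∃ P', ∃ h : P' < n, ∃ h2 : P'+1 < n, dd v C (P'+1) Q = m ∧
        Q ≤ (v ⟨P', h⟩ : ℕ) ∧ (v ⟨P'+1, h2⟩ : ℕ) < Q := by
  intro k
  induction k with
  | zero => intro P hk hPn hd hb; omega
  | succ k ih =>
    intro P hk hPn hd hb
    have hcell := dd_cell hC hm (by omega) hQ hd
    have h2 : P + 1 < n := hcell.2.1
    by_cases hv : (v ⟨P+1, h2⟩ : ℕ) < Q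
    · exact ⟨P, hPn, h2, hd, hb, hv⟩
    · push_neg at hv
      obtain ⟨s, hs, he⟩ := dd_step_row hC h2 Q
      rw [if_neg (by omega : ¬ ((v ⟨P+1, h2⟩ : ℕ) < Q))] at he
      have hd2 : dd v C (P+1+1) Q = m := by
        have := hmax (P+1+1) Q (by omega) hQ
        omega
      exact ih (P+1) (by omega) h2 hd2 hv

lemma slide_left (hC : IsASM C) (hm : 1 ≤ m)
    (hmax : ∀ P Q, P ≤ n → Q ≤ n → dd v C P Q ≤ m)
    {I : ℕ} (hI : I + 1 < n) :
    ∀ j, j < n → dd v C (I+1) (j+1) = m →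
      (v ⟨I+1, hI⟩ : ℕ) ≤ j → j < (v ⟨I, by omega⟩ : ℕ) →
      ∃ j', ∃ h : j' < n, dd v C (I+1) (j'+1) = m ∧ (v ⟨I+1, hI⟩ : ℕ) ≤ j' ∧
        j' < (v ⟨I, by omega⟩ : ℕ) ∧ I < (v.symm ⟨j', h⟩ : ℕ) := by
  intro j
  induction j using Nat.strong_induction_on with
  | _ j ih =>
    intro hjn hd h1 h2
    by_cases hb : I < (v.symm ⟨j, hjn⟩ : ℕ)
    · exact ⟨j, hjn, hd, h1, h2, hb⟩
    · push_neg at hb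
      obtain ⟨s, hs, he⟩ := dd_step_col hC (I+1) hjn
      rw [if_pos (by omega : ((v.symm ⟨j, hjn⟩ : ℕ) < I+1))] at he
      have hdj : dd v C (I+1) j = m := by
        have := hmax (I+1) j (by omega) (by omega)
        omega
      have hj1 : 1 ≤ j := (dd_cell hC hm (by omega) (by omega) hdj).2.2.1
      have hne : (v ⟨I+1, hI⟩ : ℕ) ≠ j := by
        intro hvv
        have hv2 : v ⟨I+1, hI⟩ = ⟨j, hjn⟩ := by
          apply Fin.ext; simp only [Fin.val_mk]; exact hvv
        rw [← hv2, Equiv.symm_apply_apply] at hb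
        simp only [Fin.val_mk] at hb
        omega
      obtain ⟨j₂, rfl⟩ : ∃ j₂, j = j₂ + 1 := ⟨j-1, by omega⟩
      exact ih j₂ (by omega) (by omega) hdj (by omega) (by omega)

lemma slide_right2 (hC : IsASM C) (hm : 1 ≤ m)
    (hmax : ∀ P Q, P ≤ n → Q ≤ n → dd v C P Q ≤ m)
    {I : ℕ} (hI : I + 1 < n) :
    ∀ k j, (v ⟨I, by omega⟩ : ℕ) - j ≤ k → ∀ hjn : j < n, dd v C (I+1) (j+1) = m →
      (v ⟨I+1, hI⟩ : ℕ) ≤ j → j < (v ⟨I, by omega⟩ : ℕ) → I < (v.symm ⟨j, hjn⟩ : ℕ) →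
      ∃ j', ∃ h : j' < n, ∃ h2 : j'+1 < n, dd v C (I+1) (j'+1) = m ∧
        (v ⟨I+1, hI⟩ : ℕ) ≤ j' ∧ j' < (v ⟨I, by omega⟩ : ℕ) ∧
        I < (v.symm ⟨j', h⟩ : ℕ) ∧ (v.symm ⟨j'+1, h2⟩ : ℕ) ≤ I := by
  intro k
  induction k with
  | zero => intro j hk hjn hd h1 h2 h3; omega
  | succ k ih =>
    intro j hk hjn hd h1 h2 h3
    have hcell := dd_cell hC hm (by omega) (by omega) hd
    have h2n : j + 1 < n := hcell.2.2.2
    by_cases hb : (v.symm ⟨j+1, h2n⟩ : ℕ) ≤ I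
    · exact ⟨j, hjn, h2n, hd, h1, h2, h3, hb⟩
    · push_neg at hb
      obtain ⟨s, hs, he⟩ := dd_step_col hC (I+1) h2n
      rw [if_neg (by omega : ¬ ((v.symm ⟨j+1, h2n⟩ : ℕ) < I+1))] at he
      have hd2 : dd v C (I+1) (j+1+1) = m := by
        have := hmax (I+1) (j+1+1) (by omega) (by omega)
        omega
      have hne : (v ⟨I, by omega⟩ : ℕ) ≠ j+1 := by
        intro hvv
        have hv2 : v ⟨I, by omega⟩ = ⟨j+1, h2n⟩ := by
          apply Fin.ext; simp only [Fin.val_mk]; exact hvv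
        rw [← hv2, Equiv.symm_apply_apply] at hb
        simp only [Fin.val_mk] at hb
        omega
      exact ih (j+1) (by omega) h2n hd2 (by omega) (by omega) hb

lemma find_addable (hC : IsASM C) (hm : 1 ≤ m)
    (hmax : ∀ P Q, P ≤ n → Q ≤ n → dd v C P Q ≤ m)
    {P Q : ℕ} (hP : P ≤ n) (hQ : Q ≤ n) (hd : dd v C P Q = m) :
    ∃ i j : Fin n, Addable v i j ∧ dd v C ((i:ℕ)+1) ((j:ℕ)+1) = m := by
  obtain ⟨hP1, hPn, hQ1, hQn⟩ := dd_cell hC hm hP hQ hd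
  obtain ⟨P₁, rfl⟩ : ∃ P₁, P = P₁ + 1 := ⟨P-1, by omega⟩
  obtain ⟨P', hP', hd', hb'⟩ := slide_up hC hm hmax Q hQ P₁ (by omega) hd
  obtain ⟨I, hI, hI1, hdI, hup, hdn⟩ := slide_down hC hm hmax Q hQ n P' (by omega) hP' hd' hb'
  obtain ⟨j0, rfl⟩ : ∃ j0, Q = j0 + 1 := ⟨Q-1, by omega⟩
  obtain ⟨j1, hj1, hdj1, hA1, hA2, hA3⟩ :=
    slide_left hC hm hmax hI1 j0 (by omega) hdI (by omega) (by omega)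
  obtain ⟨j2, hj2, hj2n, hdj2, hB1, hB2, hB3, hB4⟩ :=
    slide_right2 hC hm hmax hI1 n j1 (by omega) hj1 hdj1 hA1 hA2 hA3
  refine ⟨⟨I, hI⟩, ⟨j2, hj2⟩, ⟨hI1, hj2n, hB1, hB2, hB4, hB3⟩, hdj2⟩

lemma exists_addable_le {v : Equiv.Perm (Fin n)} {C : Matrix (Fin n) (Fin n) ℤ}
    (hC : IsASM C)
    (h1 : asmLE C (permMatrix v)) (h2 : ¬ asmLE (permMatrix v) C) :
    ∃ i j : Fin n, Addable v i j ∧ asmLE C (bump v i j) := by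
  classical
  have hne : ((range (n+1)) ×ˢ (range (n+1))).Nonempty := ⟨(0,0), by simp⟩
  obtain ⟨pq, hpq, hmax⟩ := Finset.exists_max_image ((range (n+1)) ×ˢ (range (n+1)))
    (fun pq => dd v C pq.1 pq.2) hne
  set m := dd v C pq.1 pq.2 with hmdef
  have hmem : pq.1 ≤ n ∧ pq.2 ≤ n := by
    simp only [Finset.mem_product, Finset.mem_range] at hpq; omega
  have hmax' : ∀ P Q, P ≤ n → Q ≤ n → dd v C P Q ≤ m := by
    intro P Q hP hQ
    exact hmax (P, Q) (by simp only [Finset.mem_product, Finset.mem_range]; omega)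
  have hm : 1 ≤ m := by
    obtain ⟨a, hab⟩ := not_forall.mp h2
    obtain ⟨b, hb⟩ := not_forall.mp hab
    push_neg at hb
    have hd1 : 1 ≤ dd v C ((a:ℕ)+1) ((b:ℕ)+1) := by
      unfold dd; rw [← corner_eq_rp, ← corner_eq_rp]; omega
    have := hmax' ((a:ℕ)+1) ((b:ℕ)+1) a.isLt b.isLt
    omega
  obtain ⟨i, j, hadd, hdd⟩ := find_addable hC hm hmax' hmem.1 hmem.2 hmdef.symm
  refine ⟨i, j, hadd, ?_⟩
  intro a b
  obtain ⟨hi, hj, _⟩ := hadd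
  rw [bump_corner hi hj]
  by_cases hab : a = i ∧ b = j
  · obtain ⟨rfl, rfl⟩ := hab
    rw [if_pos ⟨rfl, rfl⟩]
    have hd2 : dd v C ((a:ℕ)+1) ((b:ℕ)+1) = m := hdd
    unfold dd at hd2
    rw [← corner_eq_rp, ← corner_eq_rp] at hd2
    omega
  · rw [if_neg hab]
    simpa using h1 a b

end ASMAux
end Chunk7

section Chunk8
open Finset ASMAux

theorem joinIrred_iff_bigrassmannian_aux {n : ℕ} (v : Equiv.Perm (Fin n)) :
    JoinIrred (permMatrix v) ↔
      ∃! p : Fin n × Fin n, ∃ (hi : (p.1 : ℕ) + 1 < n) (hj : (p.2 : ℕ) + 1 < n),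
        v.symm ⟨p.1 + 1, hi⟩ < v.symm p.1 ∧ v ⟨p.2 + 1, hj⟩ < v p.2 := by
  constructor
  · rintro ⟨hA, C, ⟨hCasm, hCcov⟩, huniq⟩
    obtain ⟨i0, j0, hadd0, _⟩ := exists_addable_le hCasm hCcov.1.1 hCcov.1.2
    have haddu : ∀ i j : Fin n, Addable v i j → i = i0 ∧ j = j0 := by
      intro i j hij
      have e1 : bump v i j = C := huniq _ ⟨bump_isASM hij, bump_asmCovers hij⟩
      have e2 : bump v i0 j0 = C := huniq _ ⟨bump_isASM hadd0, bump_asmCovers hadd0⟩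
      have e3 : bump v i j = bump v i0 j0 := by rw [e1, e2]
      obtain ⟨hi, hj, _⟩ := hij
      obtain ⟨hi0, hj0, _⟩ := hadd0
      have e4 := congrArg (fun M => cornerSum M i j) e3
      rw [bump_corner hi hj i j, bump_corner hi0 hj0 i j, if_pos ⟨rfl, rfl⟩] at e4
      by_contra hne
      rw [if_neg hne] at e4
      omega
    refine ⟨(j0, i0), ?_, ?_⟩
    · obtain ⟨hi, hj, c1, c2, c3, c4⟩ := hadd0
      refine ⟨hj, hi, ?_, ?_⟩
      · rw [Fin.lt_def]; simp only; omega
      · rw [Fin.lt_def]; simp only; omega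
    · rintro ⟨a, b⟩ ⟨ha1, hb1, hsa, hsb⟩
      have hdb : Desc v b := ⟨hb1, Fin.lt_def.mp hsb⟩
      have hda : Desc v.symm a := ⟨ha1, Fin.lt_def.mp hsa⟩
      obtain ⟨jb, hjb⟩ := desc_addable hdb
      obtain ⟨ia, hia⟩ := desc_addable hda
      have h1 := haddu b jb hjb
      have h2 := haddu ia a (by have := addable_symm hia; simpa using this)
      exact Prod.ext h2.2 h1.1
  · rintro ⟨⟨e, d⟩, ⟨he1, hd1, hse, hsd⟩, hU⟩
    have hdd : Desc v d := ⟨hd1, Fin.lt_def.mp hsd⟩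
    have hde : Desc v.symm e := ⟨he1, Fin.lt_def.mp hse⟩
    have hUdesc : ∀ (a b : Fin n), Desc v.symm a → Desc v b → a = e ∧ b = d := by
      rintro a b ⟨ha1, ha2⟩ ⟨hb1, hb2⟩
      have := hU (a, b) ⟨ha1, hb1, Fin.lt_def.mpr ha2, Fin.lt_def.mpr hb2⟩
      rw [Prod.ext_iff] at this
      exact ⟨this.1, this.2⟩
    have haddable : ∀ i j : Fin n, Addable v i j → i = d ∧ j = e := by
      intro i j hij
      obtain ⟨h1, h2⟩ := addable_desc hij
      have := hUdesc j i h2 h1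
      exact ⟨this.2, this.1⟩
    obtain ⟨j1, hj1⟩ := desc_addable hdd
    have hj1e : j1 = e := (haddable d j1 hj1).2
    rw [hj1e] at hj1
    refine ⟨perm_isASM v, bump v d e, ⟨bump_isASM hj1, bump_asmCovers hj1⟩, ?_⟩
    rintro C' ⟨hC'asm, hC'cov⟩
    obtain ⟨i2, j2, hadd2, hle2⟩ := exists_addable_le hC'asm hC'cov.1.1 hC'cov.1.2
    obtain ⟨hi2d, hj2e⟩ := haddable i2 j2 hadd2
    rw [hi2d, hj2e] at hle2
    by_contra hne
    have hlt : asmLT C' (bump v d e) := by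
      refine ⟨hle2, ?_⟩
      intro hback
      apply hne
      apply corner_inj
      intro a b
      exact le_antisymm (hback a b) (hle2 a b)
    exact hC'cov.2 _ (bump_isASM hj1) hlt (bump_asmCovers hj1).1

end Chunk8

theorem joinIrred_iff_bigrassmannian {n : ℕ} (v : Equiv.Perm (Fin n)) :
    JoinIrred (permMatrix v) ↔
      ∃! p : Fin n × Fin n, ∃ (hi : (p.1 : ℕ) + 1 < n) (hj : (p.2 : ℕ) + 1 < n),
        v.symm ⟨p.1 + 1, hi⟩ < v.symm p.1 ∧ v ⟨p.2 + 1, hj⟩ < v p.2 :=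
  joinIrred_iff_bigrassmannian_aux v
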